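/- A uniformly totally bounded class of compact metric spaces is precompact in the Gromov–Hausdorff topology: if D > 0 and N : (0, D] → ℕ are such that every space X in the class has diameter at most D and can be covered by N(ε) balls of radius ε for every ε ∈ (0, D], then every sequence in the class has a subsequence converging in Gromov–Hausdorff distance to a compact metric space. -/
import Mathlib

open Metric Set GromovHausdorff Filter

/-- Gromov's precompactness criterion: a uniformly totally bounded class of compact metric
spaces is precompact in the Gromov–Hausdorff topology.  If each space of a sequence has
diameter at most `D` and can be covered by `N ε` balls of radius `ε` for every
`ε ∈ (0, D]`, then a subsequence converges in Gromov–Hausdorff distance to a compact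
metric space. -/
theorem gromov_precompactness (D : ℝ) (hD : 0 < D) (N : ℝ → ℕ)
    (X : ℕ → Type) [∀ j, MetricSpace (X j)] [∀ j, CompactSpace (X j)] [∀ j, Nonempty (X j)]
    (hdiam : ∀ j, diam (univ : Set (X j)) ≤ D)
    (hcov : ∀ j, ∀ ε : ℝ, ε ∈ Set.Ioc 0 D →
      ∃ s : Finset (X j), s.card ≤ N ε ∧ (univ : Set (X j)) ⊆ ⋃ x ∈ s, ball x ε) :
    ∃ φ : ℕ → ℕ, StrictMono φ ∧ ∃ Y : GHSpace,
      Tendsto (fun k => toGHSpace (X (φ k))) atTop (nhds Y) := by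
  set p : ℕ → GHSpace := fun j => toGHSpace (X j) with hp
  set u : ℕ → ℝ := fun n => D / (n + 1) with hu
  have upos : ∀ n, 0 < u n := fun n => div_pos hD (by positivity)
  have uleD : ∀ n, u n ≤ D := fun n => by
    rw [hu]
    calc D / (n + 1) ≤ D / 1 := by
          apply div_le_div_of_nonneg_left hD.le one_pos
          linarith [Nat.cast_nonneg (α := ℝ) n]
      _ = D := div_one D
  have ulim : Tendsto u atTop (nhds 0) :=
    tendsto_const_nhds.div_atTop (tendsto_atTop_add_const_right _ 1 tendsto_natCast_atTop_atTop)
  have tb : TotallyBounded (range p) := by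
    apply GromovHausdorff.totallyBounded (u := u) (K := fun n => N (u n)) (C := D) ulim
    · rintro q ⟨j, rfl⟩
      obtain ⟨e⟩ : Nonempty ((p j).Rep ≃ᵢ X j) := by
        rw [← toGHSpace_eq_toGHSpace_iff_isometryEquiv, (p j).toGHSpace_rep]
      calc diam (univ : Set (p j).Rep) = diam (range e) := (e.isometry.diam_range).symm
        _ = diam (univ : Set (X j)) := by rw [e.range_eq_univ]
        _ ≤ D := hdiam j
    · rintro q ⟨j, rfl⟩ n
      obtain ⟨e⟩ : Nonempty ((p j).Rep ≃ᵢ X j) := by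
        rw [← toGHSpace_eq_toGHSpace_iff_isometryEquiv, (p j).toGHSpace_rep]
      obtain ⟨s, hs, hcover⟩ := hcov j (u n) ⟨upos n, uleD n⟩
      refine ⟨(e.symm '' (s : Set (X j))), ?_, ?_⟩
      · calc Cardinal.mk (e.symm '' (s : Set (X j))) = Cardinal.mk (s : Set (X j)) :=
              Cardinal.mk_image_eq e.symm.injective
          _ ≤ N (u n) := by
              have h1 : Cardinal.mk (↑s : Set (X j)) = s.card := Cardinal.mk_coe_finset
              rw [h1]; exact_mod_cast hs
      · intro x _
        have := hcover (mem_univ (e x))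
        simp only [mem_iUnion] at this ⊢
        obtain ⟨c, hc, hxc⟩ := this
        refine ⟨e.symm c, mem_image_of_mem _ hc, ?_⟩
        rw [mem_ball] at hxc ⊢
        have h2 := e.symm.dist_eq (e x) c
        rw [e.symm_apply_apply] at h2
        rw [h2]; exact hxc
  have hcomp : IsCompact (closure (range p)) :=
    TotallyBounded.isCompact_of_isClosed tb.closure isClosed_closure
  obtain ⟨Y, _, φ, hφ, hconv⟩ := hcomp.tendsto_subseq (x := p)
    (fun n => subset_closure (mem_range_self n))
  exact ⟨φ, hφ, Y, hconv⟩
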